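/- For all multi-indices k, N ∈ ℕ^n with 0 ≤ k ≤ N componentwise, one has ∏_{r,s=1}^n 1/(q^{1+k_r−k_s} x_r/x_s;q,p)_{N_r−k_r} = V(k) · ∏_{r,s=1}^n (q^{−N_s} x_r/x_s;q,p)_{k_r}/(q x_r/x_s;q,p)_{N_r} · (−1)^{|k|} · q^{|N|·|k| − C(|k|,2) + Σ_{r=1}^n (r−1)k_r}, where C(m,2) = m(m−1)/2. -/

import Mathlib

open Finset

/-- The modified Jacobi theta function `θ(z;p) = ∏_{j≥0} (1 - z p^j)(1 - p^{j+1}/z)`. -/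
noncomputable def theta (p z : ℂ) : ℂ :=
  ∏' j : ℕ, ((1 - z * p ^ j) * (1 - p ^ (j + 1) / z))

lemma hasProd_zero_of_eq_zero {f : ℕ → ℂ} (b : ℕ) (h : f b = 0) : HasProd f 0 := by
  have he : ∀ᶠ s : Finset ℕ in Filter.atTop, ∏ i ∈ s, f i = (0:ℂ) := by
    filter_upwards [Filter.eventually_ge_atTop {b}] with s hs
    exact Finset.prod_eq_zero (hs (Finset.mem_singleton_self b)) h
  exact Filter.Tendsto.congr' (he.mono fun s hs => hs.symm) tendsto_const_nhds

lemma multipliable_one_sub {u : ℕ → ℂ} (hu : Summable u) :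
    Multipliable fun j => 1 - u j := by
  by_cases h : ∃ b, 1 - u b = 0
  · obtain ⟨b, hb⟩ := h; exact ⟨0, hasProd_zero_of_eq_zero b hb⟩
  · push_neg at h
    have hev : ∀ᶠ j in Filter.cofinite, ‖u j‖ ≤ 1/2 := by
      have hmem : Metric.closedBall (0:ℂ) (1/2) ∈ nhds (0:ℂ) :=
        Metric.closedBall_mem_nhds 0 (by norm_num)
      filter_upwards [hu.tendsto_cofinite_zero.eventually_mem hmem] with j hj
      simpa [Complex.dist_eq] using hj
    have hlog : Summable fun j => Complex.log (1 - u j) := by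
      apply Summable.of_norm_bounded_eventually (g := fun j => 3/2 * ‖u j‖) (hu.norm.mul_left _)
      filter_upwards [hev] with j hj
      have := Complex.norm_log_one_add_half_le_self (z := -u j) (by simpa using hj)
      simpa [sub_eq_add_neg] using this
    exact Complex.multipliable_of_summable_log hlog

lemma theta_inv (p : ℂ) (hp : ‖p‖ < 1) {z : ℂ} (hz : z ≠ 0) :
    theta p z⁻¹ = -z⁻¹ * theta p z := by
  have hps : Summable fun j : ℕ => p ^ j :=
    summable_geometric_of_norm_lt_one (by simpa using hp)
  have hps' : Summable fun j : ℕ => p ^ (j + 1) :=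
    (summable_nat_add_iff 1).mpr hps
  have hA : ∀ w : ℂ, Multipliable fun j : ℕ => 1 - w * p ^ j :=
    fun w => multipliable_one_sub (hps.mul_left w)
  have hA' : ∀ w : ℂ, Multipliable fun j : ℕ => 1 - w * p ^ (j + 1) :=
    fun w => multipliable_one_sub (hps'.mul_left w)
  have hB : ∀ w : ℂ, Multipliable fun j : ℕ => 1 - p ^ (j + 1) / w := by
    intro w
    have : Summable fun j : ℕ => p ^ (j + 1) / w := hps'.div_const w
    exact multipliable_one_sub this
  have key : ∀ w : ℂ, theta p w
      = (1 - w) * ((∏' j : ℕ, (1 - w * p ^ (j+1))) * ∏' j : ℕ, (1 - p ^ (j+1) / w)) := by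
    intro w
    have h1 : theta p w = (∏' j : ℕ, (1 - w * p ^ j)) * ∏' j : ℕ, (1 - p ^ (j+1) / w) := by
      rw [theta]; exact Multipliable.tprod_mul (hA w) (hB w)
    have h2 : (∏' j : ℕ, (1 - w * p ^ j)) = (1 - w * p ^ 0) * ∏' j : ℕ, (1 - w * p ^ (j+1)) :=
      tprod_eq_zero_mul' (hA' w)
    rw [h1, h2, pow_zero, mul_one]
    ring
  rw [key, key]
  have e1 : (∏' j : ℕ, (1 - z⁻¹ * p ^ (j+1))) = ∏' j : ℕ, (1 - p ^ (j+1) / z) := by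
    exact tprod_congr fun j => by rw [div_eq_mul_inv, mul_comm]
  have e2 : (∏' j : ℕ, (1 - p ^ (j+1) / z⁻¹)) = ∏' j : ℕ, (1 - z * p ^ (j+1)) := by
    exact tprod_congr fun j => by rw [div_inv_eq_mul, mul_comm]
  rw [e1, e2]
  have : (1 - z⁻¹) = -z⁻¹ * (1 - z) := by field_simp; ring
  rw [this]; ring

/-- The theta shifted factorial `(z;q,p)_k`, defined for all integers `k`:
for `k ≥ 0` it is `∏_{j=0}^{k-1} θ(z q^j;p)`, and for `k < 0` it is
`1/(z q^k;q,p)_{-k} = (∏_{j=0}^{-k-1} θ(z q^{k+j};p))⁻¹`. -/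
noncomputable def tpoch (p q z : ℂ) (k : ℤ) : ℂ :=
  if 0 ≤ k then ∏ j ∈ Finset.range k.toNat, theta p (z * q ^ (j : ℤ))
  else (∏ j ∈ Finset.range (-k).toNat, theta p (z * q ^ (k + (j : ℤ))))⁻¹

section Comb

variable {n : ℕ} (p q : ℂ) (x : Fin n → ℂ)

/-- single theta factor -/
noncomputable def TT (r s : Fin n) (m : ℤ) : ℂ := theta p (q ^ m * (x r / x s))

/-- interval product of theta factors -/
noncomputable def HH (r s : Fin n) (b c : ℤ) : ℂ := ∏ m ∈ Finset.Ioc b c, TT p q x r s m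

lemma prod_range_Ioc (f : ℤ → ℂ) (b : ℤ) (c : ℕ) :
    ∏ j ∈ range c, f (b + 1 + j) = ∏ m ∈ Finset.Ioc b (b + c), f m := by
  induction c with
  | zero => simp
  | succ c ih =>
    have hins : Finset.Ioc b (b + ((c:ℕ)+1:ℕ)) = insert (b + c + 1) (Finset.Ioc b (b + c)) := by
      ext m
      simp only [Finset.mem_Ioc, Finset.mem_insert]
      push_cast
      omega
    rw [Finset.prod_range_succ, ih, hins,
      Finset.prod_insert (by simp only [Finset.mem_Ioc]; omega)]
    rw [show b + 1 + (c : ℤ) = b + c + 1 by ring, mul_comm]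

lemma tpoch_zero (z : ℂ) : tpoch p q z 0 = 1 := by simp [tpoch]

lemma tpoch_pos (hq : q ≠ 0) (r s : Fin n) (b : ℤ) (c : ℕ) :
    tpoch p q (q ^ (b + 1) * (x r / x s)) (c : ℤ) = HH p q x r s b (b + c) := by
  rw [tpoch, if_pos (Int.natCast_nonneg c), Int.toNat_natCast, HH,
    ← prod_range_Ioc (fun m => TT p q x r s m) b c]
  refine Finset.prod_congr rfl fun j hj => ?_
  rw [TT]
  congr 1
  rw [mul_right_comm, ← zpow_add₀ hq]

lemma tpoch_neg (hq : q ≠ 0) (r s : Fin n) (b : ℤ) (c : ℕ) :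
    tpoch p q (q ^ (b + 1) * (x r / x s)) (-(c : ℤ)) = (HH p q x r s (b - c) b)⁻¹ := by
  rcases Nat.eq_zero_or_pos c with rfl | hc
  · simp [tpoch, HH]
  · rw [tpoch, if_neg (by omega : ¬ (0:ℤ) ≤ -(c:ℤ)), neg_neg, Int.toNat_natCast]
    have h := prod_range_Ioc (fun m => TT p q x r s m) (b - c) c
    rw [show (b:ℤ) - c + c = b by ring] at h
    rw [HH, ← h]
    congr 1
    refine Finset.prod_congr rfl fun j hj => ?_
    rw [TT]
    congr 1
    rw [mul_right_comm, ← zpow_add₀ hq]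
    congr 2
    ring

lemma HH_ne (hX : ∀ r s : Fin n, ∀ m : ℤ, (r ≠ s ∨ m ≠ 0) → theta p (q ^ m * (x r / x s)) ≠ 0)
    (r s : Fin n) (b c : ℤ) (h : r ≠ s ∨ 0 ≤ b) : HH p q x r s b c ≠ 0 := by
  rw [HH]
  refine Finset.prod_ne_zero_iff.mpr fun m hm => ?_
  rcases h with h | h
  · exact hX r s m (Or.inl h)
  · rw [Finset.mem_Ioc] at hm
    exact hX r s m (Or.inr (by omega))

lemma HH_mul (r s : Fin n) {b c d : ℤ} (h1 : b ≤ c) (h2 : c ≤ d) :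
    HH p q x r s b c * HH p q x r s c d = HH p q x r s b d := by
  rw [HH, HH, HH, ← Finset.prod_union (by
      rw [Finset.disjoint_left]
      intro m hm hm'
      rw [Finset.mem_Ioc] at hm hm'
      omega),
    Finset.Ioc_union_Ioc_eq_Ioc h1 h2]

end Comb
section PP
variable {n : ℕ} (p q : ℂ) (x : Fin n → ℂ)

lemma PP (hq : q ≠ 0)
    (hX : ∀ r s : Fin n, ∀ m : ℤ, (r ≠ s ∨ m ≠ 0) → theta p (q ^ m * (x r / x s)) ≠ 0)
    (N k : Fin n → ℕ) (hkN : ∀ r, k r ≤ N r) (r s : Fin n) :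
    (tpoch p q (q ^ (1 + (k r : ℤ) - (k s : ℤ)) * (x r / x s)) ((N r : ℤ) - (k r : ℤ)))⁻¹
    = tpoch p q (q * (x r / x s)) ((k r : ℤ) - (k s : ℤ))
      * tpoch p q (q ^ (1 + (N r : ℤ) - (k s : ℤ)) * (x r / x s)) ((k s : ℕ) : ℤ)
      * (tpoch p q (q * (x r / x s)) ((N r : ℕ) : ℤ))⁻¹ := by
  have hq1 : (q : ℂ) * (x r / x s) = q ^ ((0:ℤ) + 1) * (x r / x s) := by norm_num
  have hne : ∀ b c : ℤ, (r ≠ s ∨ 0 ≤ b) → HH p q x r s b c ≠ 0 := fun b c h =>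
    HH_ne p q x hX r s b c h
  have hL : tpoch p q (q ^ (1 + (k r : ℤ) - (k s : ℤ)) * (x r / x s)) ((N r : ℤ) - (k r : ℤ))
      = HH p q x r s ((k r : ℤ) - (k s : ℤ)) ((N r : ℤ) - (k s : ℤ)) := by
    rw [show ((N r : ℤ) - (k r : ℤ)) = ((N r - k r : ℕ) : ℤ) by have := hkN r; omega,
      show (1 + (k r : ℤ) - (k s : ℤ)) = ((k r : ℤ) - (k s : ℤ)) + 1 by ring,
      tpoch_pos p q x hq r s _ _,
      show ((k r : ℤ) - (k s : ℤ)) + ((N r - k r : ℕ) : ℤ) = (N r : ℤ) - (k s : ℤ) by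
        have := hkN r; omega]
  have hM : tpoch p q (q ^ (1 + (N r : ℤ) - (k s : ℤ)) * (x r / x s)) ((k s : ℕ) : ℤ)
      = HH p q x r s ((N r : ℤ) - (k s : ℤ)) (N r : ℤ) := by
    rw [show (1 + (N r : ℤ) - (k s : ℤ)) = ((N r : ℤ) - (k s : ℤ)) + 1 by ring,
      tpoch_pos p q x hq r s _ _,
      show ((N r : ℤ) - (k s : ℤ)) + ((k s : ℕ) : ℤ) = (N r : ℤ) by omega]
  have hR : tpoch p q (q * (x r / x s)) ((N r : ℕ) : ℤ) = HH p q x r s 0 (N r : ℤ) := by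
    rw [hq1, tpoch_pos p q x hq r s _ _, zero_add]
  rw [hL, hM, hR]
  rcases le_or_gt (k s) (k r) with hc | hc
  · have hK : tpoch p q (q * (x r / x s)) ((k r : ℤ) - (k s : ℤ))
        = HH p q x r s 0 ((k r : ℤ) - (k s : ℤ)) := by
      have h1 : tpoch p q (q * (x r / x s)) ((k r : ℤ) - (k s : ℤ))
          = tpoch p q (q ^ ((0:ℤ)+1) * (x r / x s)) (((k r - k s : ℕ) : ℕ) : ℤ) := by
        rw [← hq1]; congr 1; omega
      rw [h1, tpoch_pos p q x hq r s _ _]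
      congr 1
      omega
    rw [hK]
    have e1 : HH p q x r s 0 ((k r : ℤ) - (k s : ℤ))
          * HH p q x r s ((k r : ℤ) - (k s : ℤ)) ((N r : ℤ) - (k s : ℤ))
        = HH p q x r s 0 ((N r : ℤ) - (k s : ℤ)) :=
      HH_mul p q x r s (by omega) (by have := hkN r; omega)
    have e2 : HH p q x r s 0 ((N r : ℤ) - (k s : ℤ)) * HH p q x r s ((N r : ℤ) - (k s : ℤ)) (N r : ℤ)
        = HH p q x r s 0 (N r : ℤ) :=
      HH_mul p q x r s (by have := hkN r; omega) (by omega)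
    have n1 : HH p q x r s ((k r : ℤ) - (k s : ℤ)) ((N r : ℤ) - (k s : ℤ)) ≠ 0 :=
      hne _ _ (Or.inr (by omega))
    have n3 : HH p q x r s 0 ((k r : ℤ) - (k s : ℤ)) ≠ 0 := hne _ _ (Or.inr le_rfl)
    have n4 : HH p q x r s ((N r : ℤ) - (k s : ℤ)) (N r : ℤ) ≠ 0 := by
      rcases eq_or_ne r s with h | hrs
      · subst h; exact hne _ _ (Or.inr (by have := hkN r; omega))
      · exact hne _ _ (Or.inl hrs)
    have h6 : HH p q x r s 0 (N r : ℤ)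
        = HH p q x r s 0 ((k r : ℤ) - (k s : ℤ))
          * HH p q x r s ((k r : ℤ) - (k s : ℤ)) ((N r : ℤ) - (k s : ℤ))
          * HH p q x r s ((N r : ℤ) - (k s : ℤ)) (N r : ℤ) := by
      rw [e1, e2]
    calc (HH p q x r s ((k r : ℤ) - (k s : ℤ)) ((N r : ℤ) - (k s : ℤ)))⁻¹
        = (HH p q x r s 0 ((k r : ℤ) - (k s : ℤ))
            * (HH p q x r s 0 ((k r : ℤ) - (k s : ℤ)))⁻¹)
          * ((HH p q x r s ((N r : ℤ) - (k s : ℤ)) (N r : ℤ)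
            * (HH p q x r s ((N r : ℤ) - (k s : ℤ)) (N r : ℤ))⁻¹)
            * (HH p q x r s ((k r : ℤ) - (k s : ℤ)) ((N r : ℤ) - (k s : ℤ)))⁻¹) := by
          rw [mul_inv_cancel₀ n3, mul_inv_cancel₀ n4]; ring
      _ = HH p q x r s 0 ((k r : ℤ) - (k s : ℤ)) * HH p q x r s ((N r : ℤ) - (k s : ℤ)) (N r : ℤ)
          * (HH p q x r s 0 ((k r : ℤ) - (k s : ℤ))
            * HH p q x r s ((k r : ℤ) - (k s : ℤ)) ((N r : ℤ) - (k s : ℤ))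
            * HH p q x r s ((N r : ℤ) - (k s : ℤ)) (N r : ℤ))⁻¹ := by
          rw [mul_inv_rev, mul_inv_rev]; ring
      _ = _ := by rw [← h6]
  · have hrs : r ≠ s := by
      intro h; subst h; omega
    have hK : tpoch p q (q * (x r / x s)) ((k r : ℤ) - (k s : ℤ))
        = (HH p q x r s ((k r : ℤ) - (k s : ℤ)) 0)⁻¹ := by
      have h1 : tpoch p q (q * (x r / x s)) ((k r : ℤ) - (k s : ℤ))
          = tpoch p q (q ^ ((0:ℤ)+1) * (x r / x s)) (-((k s - k r : ℕ) : ℤ)) := by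
        rw [← hq1]; congr 1; omega
      rw [h1, tpoch_neg p q x hq r s _ _]
      congr 2
      omega
    rw [hK]
    have e1 : HH p q x r s ((k r : ℤ) - (k s : ℤ)) 0 * HH p q x r s 0 (N r : ℤ)
        = HH p q x r s ((k r : ℤ) - (k s : ℤ)) (N r : ℤ) :=
      HH_mul p q x r s (by omega) (by omega)
    have e2 : HH p q x r s ((k r : ℤ) - (k s : ℤ)) ((N r : ℤ) - (k s : ℤ))
          * HH p q x r s ((N r : ℤ) - (k s : ℤ)) (N r : ℤ)
        = HH p q x r s ((k r : ℤ) - (k s : ℤ)) (N r : ℤ) :=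
      HH_mul p q x r s (by have := hkN r; omega) (by omega)
    have n4 : HH p q x r s ((N r : ℤ) - (k s : ℤ)) (N r : ℤ) ≠ 0 := hne _ _ (Or.inl hrs)
    have hAD : HH p q x r s ((k r : ℤ) - (k s : ℤ)) ((N r : ℤ) - (k s : ℤ))
          * HH p q x r s ((N r : ℤ) - (k s : ℤ)) (N r : ℤ)
        = HH p q x r s ((k r : ℤ) - (k s : ℤ)) 0 * HH p q x r s 0 (N r : ℤ) := e2.trans e1.symm
    calc (HH p q x r s ((k r : ℤ) - (k s : ℤ)) ((N r : ℤ) - (k s : ℤ)))⁻¹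
        = HH p q x r s ((N r : ℤ) - (k s : ℤ)) (N r : ℤ)
          * (HH p q x r s ((k r : ℤ) - (k s : ℤ)) ((N r : ℤ) - (k s : ℤ))
            * HH p q x r s ((N r : ℤ) - (k s : ℤ)) (N r : ℤ))⁻¹ := by
          rw [mul_inv_rev, ← mul_assoc, mul_inv_cancel₀ n4, one_mul]
      _ = HH p q x r s ((N r : ℤ) - (k s : ℤ)) (N r : ℤ)
          * (HH p q x r s ((k r : ℤ) - (k s : ℤ)) 0 * HH p q x r s 0 (N r : ℤ))⁻¹ := by
          rw [hAD]
      _ = _ := by rw [mul_inv_rev]; ring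

end PP
section Pairs
variable {n : ℕ} (p q : ℂ) (x : Fin n → ℂ)

/-- `ch2 m = m*(m-1)/2`. -/
def ch2 (m : ℤ) : ℤ := m * (m - 1) / 2

lemma two_mul_ch2 (m : ℤ) : 2 * ch2 m = m * (m - 1) := by
  have he : Even (m * (m - 1)) := by
    have h := Int.even_mul_succ_self (m - 1)
    rw [show (m - 1) * (m - 1 + 1) = m * (m - 1) by ring] at h
    exact h
  obtain ⟨t, ht⟩ := he
  unfold ch2
  omega

lemma prod_zpow_sum {ι : Type*} (g : ℂ) (hg : g ≠ 0) (s : Finset ι) (e : ι → ℤ) :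
    ∏ i ∈ s, g ^ e i = g ^ (∑ i ∈ s, e i) := by
  induction s using Finset.cons_induction with
  | empty => simp
  | cons a t ha ih => rw [Finset.prod_cons, Finset.sum_cons, ih, zpow_add₀ hg]

lemma sum_range_cast (c : ℕ) : ∑ j ∈ range c, (j : ℤ) = ch2 (c : ℤ) := by
  rcases Nat.eq_zero_or_pos c with rfl | hc
  · simp [ch2]
  · have h := Finset.sum_range_id_mul_two c
    have h2 : ((∑ j ∈ range c, j : ℕ) : ℤ) = ∑ j ∈ range c, (j : ℤ) := by push_cast; rfl
    have h3 : ((c * (c - 1) : ℕ) : ℤ) = (c : ℤ) * ((c : ℤ) - 1) := by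
      push_cast [Nat.cast_sub (by omega : 1 ≤ c)]
      ring
    unfold ch2
    omega

lemma prod_neg_shift (hq : q ≠ 0) (M : ℤ) (w : ℂ) (c : ℕ) :
    ∏ j ∈ range c, (-(q ^ (M - (j:ℤ)) * w))
      = (-1 : ℂ) ^ (c : ℤ) * q ^ (M * c - ch2 (c : ℤ)) * w ^ (c : ℤ) := by
  have step : ∏ j ∈ range c, (-(q ^ (M - (j:ℤ)) * w))
      = (∏ j ∈ range c, (-1 : ℂ)) * (∏ j ∈ range c, q ^ (M - (j:ℤ))) * ∏ j ∈ range c, w := by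
    rw [← Finset.prod_mul_distrib, ← Finset.prod_mul_distrib]
    exact Finset.prod_congr rfl fun j _ => by ring
  rw [step, Finset.prod_const, Finset.prod_const, prod_zpow_sum q hq]
  have hsum : ∑ j ∈ range c, (M - (j:ℤ)) = M * c - ch2 (c:ℤ) := by
    rw [Finset.sum_sub_distrib, Finset.sum_const, Finset.card_range, sum_range_cast]
    push_cast
    ring
  rw [hsum, Finset.card_range, ← zpow_natCast (-1 : ℂ) c, ← zpow_natCast w c]

lemma telescope (g : ℕ → ℂ) (hg : ∀ j, g j ≠ 0) (c : ℕ) :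
    (∏ j ∈ range c, g (j+1)) * (∏ j ∈ range c, g j)⁻¹ = g c / g 0 := by
  induction c with
  | zero => simp [div_self (hg 0)]
  | succ c ih =>
    rw [Finset.prod_range_succ, Finset.prod_range_succ, mul_inv]
    calc (∏ j ∈ range c, g (j+1)) * g (c+1) * ((∏ j ∈ range c, g j)⁻¹ * (g c)⁻¹)
        = ((∏ j ∈ range c, g (j+1)) * (∏ j ∈ range c, g j)⁻¹) * (g (c+1) * (g c)⁻¹) := by ring
      _ = g c / g 0 * (g (c+1) * (g c)⁻¹) := by rw [ih]
      _ = g (c+1) / g 0 := by field_simp [hg 0, hg c]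

end Pairs
section Refl
variable {n : ℕ} (p q : ℂ) (x : Fin n → ℂ)

lemma prod_neg_up (hq : q ≠ 0) (w : ℂ) (c : ℕ) :
    ∏ j ∈ range c, (-(q ^ (j:ℤ) * w)) = (-1 : ℂ) ^ (c : ℤ) * q ^ ch2 (c : ℤ) * w ^ (c : ℤ) := by
  have step : ∏ j ∈ range c, (-(q ^ (j:ℤ) * w))
      = (∏ _j ∈ range c, (-1 : ℂ)) * (∏ j ∈ range c, q ^ (j:ℤ)) * ∏ _j ∈ range c, w := by
    rw [← Finset.prod_mul_distrib, ← Finset.prod_mul_distrib]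
    exact Finset.prod_congr rfl fun j _ => by ring
  rw [step, Finset.prod_const, Finset.prod_const, prod_zpow_sum q hq, sum_range_cast,
    Finset.card_range, ← zpow_natCast (-1 : ℂ) c, ← zpow_natCast w c]

lemma tpoch_reflect (hp : ‖p‖ < 1) (hq : q ≠ 0) (hx : ∀ r, x r ≠ 0)
    (r s : Fin n) (M c : ℕ) :
    tpoch p q (q ^ (1 + (M:ℤ) - (c:ℤ)) * (x s / x r)) ((c : ℕ) : ℤ)
      = (∏ j ∈ range c, (-(q ^ ((M:ℤ) - (j:ℤ)) * (x s / x r))))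
        * tpoch p q (q ^ (-(M:ℤ)) * (x r / x s)) ((c : ℕ) : ℤ) := by
  rw [tpoch, tpoch, if_pos (Int.natCast_nonneg c), if_pos (Int.natCast_nonneg c),
    Int.toNat_natCast, ← Finset.prod_mul_distrib,
    ← Finset.prod_range_reflect
      (fun j => theta p (q ^ (1 + (M:ℤ) - (c:ℤ)) * (x s / x r) * q ^ (j:ℤ))) c]
  refine Finset.prod_congr rfl fun j hj => ?_
  rw [Finset.mem_range] at hj
  have harg : q ^ (1 + (M:ℤ) - (c:ℤ)) * (x s / x r) * q ^ ((c - 1 - j : ℕ) : ℤ)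
      = q ^ ((M:ℤ) - (j:ℤ)) * (x s / x r) := by
    rw [mul_right_comm, ← zpow_add₀ hq]
    congr 2
    omega
  rw [harg]
  have hz : q ^ ((j:ℤ) - (M:ℤ)) * (x r / x s) ≠ 0 :=
    mul_ne_zero (zpow_ne_zero _ hq) (div_ne_zero (hx r) (hx s))
  have hinv : (q ^ ((j:ℤ) - (M:ℤ)) * (x r / x s))⁻¹ = q ^ ((M:ℤ) - (j:ℤ)) * (x s / x r) := by
    rw [mul_inv, ← zpow_neg, inv_div]
    congr 2
    ring
  have ht := theta_inv p hp hz
  rw [hinv] at ht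
  rw [ht]
  congr 2
  rw [mul_right_comm, ← zpow_add₀ hq]
  congr 2
  ring

lemma pair_nat (hp : ‖p‖ < 1) (hq : q ≠ 0) (hx : ∀ r, x r ≠ 0)
    (hX : ∀ r s : Fin n, ∀ m : ℤ, (r ≠ s ∨ m ≠ 0) → theta p (q ^ m * (x r / x s)) ≠ 0)
    (r s : Fin n) (hrs : r ≠ s) (c : ℕ) :
    tpoch p q (q * (x r / x s)) ((c : ℕ) : ℤ) * tpoch p q (q * (x s / x r)) (-(c : ℤ))
      = theta p (q ^ ((c:ℕ) : ℤ) * (x r / x s)) / theta p (q ^ (0:ℤ) * (x r / x s))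
        * ∏ j ∈ range c, (-(q ^ (j:ℤ) * (x r / x s))) := by
  have hgne : ∀ j : ℕ, theta p (q ^ (j:ℤ) * (x r / x s)) ≠ 0 := fun j => hX r s j (Or.inl hrs)
  rcases Nat.eq_zero_or_pos c with rfl | hc
  · simp only [Nat.cast_zero, neg_zero, tpoch_zero, Finset.range_zero, Finset.prod_empty,
      mul_one, one_mul]
    rw [div_self (hX r s 0 (Or.inl hrs))]
  · have h1 : tpoch p q (q * (x r / x s)) ((c:ℕ) : ℤ)
        = ∏ j ∈ range c, theta p (q ^ ((j+1 : ℕ):ℤ) * (x r / x s)) := by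
      rw [tpoch, if_pos (Int.natCast_nonneg c), Int.toNat_natCast]
      refine Finset.prod_congr rfl fun j _ => ?_
      congr 1
      rw [show (((j:ℕ)+1 : ℕ):ℤ) = 1 + (j:ℤ) by omega, zpow_add₀ hq, zpow_one]
      ring
    have h2 : tpoch p q (q * (x s / x r)) (-(c : ℤ))
        = (∏ j ∈ range c, ((-(q ^ (j:ℤ) * (x r / x s)))⁻¹
            * theta p (q ^ (j:ℤ) * (x r / x s))))⁻¹ := by
      rw [tpoch, if_neg (by omega : ¬ (0:ℤ) ≤ -(c:ℤ)), neg_neg, Int.toNat_natCast]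
      congr 1
      rw [← Finset.prod_range_reflect
        (fun j => theta p (q * (x s / x r) * q ^ (-(c:ℤ) + (j:ℤ)))) c]
      refine Finset.prod_congr rfl fun j hj => ?_
      rw [Finset.mem_range] at hj
      have harg : q * (x s / x r) * q ^ (-(c:ℤ) + ((c - 1 - j : ℕ):ℤ))
          = q ^ (-(j:ℤ)) * (x s / x r) := by
        rw [mul_right_comm]
        congr 1
        rw [show (-(c:ℤ) + ((c - 1 - j : ℕ):ℤ)) = -1 - (j:ℤ) by omega,
          show (-(j:ℤ)) = 1 + (-1 - (j:ℤ)) by ring, zpow_add₀ hq, zpow_one]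
      rw [harg]
      have hz : q ^ ((j:ℤ)) * (x r / x s) ≠ 0 :=
        mul_ne_zero (zpow_ne_zero _ hq) (div_ne_zero (hx r) (hx s))
      have hinv : (q ^ ((j:ℤ)) * (x r / x s))⁻¹ = q ^ (-(j:ℤ)) * (x s / x r) := by
        rw [mul_inv, ← zpow_neg, inv_div]
      have ht := theta_inv p hp hz
      rw [hinv] at ht
      rw [ht, inv_neg, hinv]
    rw [h1, h2]
    have h3 : ∏ j ∈ range c, ((-(q ^ (j:ℤ) * (x r / x s)))⁻¹
          * theta p (q ^ (j:ℤ) * (x r / x s)))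
        = (∏ j ∈ range c, (-(q ^ (j:ℤ) * (x r / x s))))⁻¹
          * ∏ j ∈ range c, theta p (q ^ (j:ℤ) * (x r / x s)) := by
      rw [Finset.prod_mul_distrib, ← Finset.prod_inv_distrib]
    rw [h3, mul_inv, inv_inv]
    have htel := telescope (fun j => theta p (q ^ (j:ℤ) * (x r / x s))) hgne c
    calc (∏ j ∈ range c, theta p (q ^ ((j+1 : ℕ):ℤ) * (x r / x s)))
          * ((∏ j ∈ range c, (-(q ^ (j:ℤ) * (x r / x s))))
            * (∏ j ∈ range c, theta p (q ^ (j:ℤ) * (x r / x s)))⁻¹)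
        = ((∏ j ∈ range c, theta p (q ^ ((j+1 : ℕ):ℤ) * (x r / x s)))
            * (∏ j ∈ range c, theta p (q ^ (j:ℤ) * (x r / x s)))⁻¹)
          * ∏ j ∈ range c, (-(q ^ (j:ℤ) * (x r / x s))) := by ring
      _ = _ := by
          rw [show (∏ j ∈ range c, theta p (q ^ ((j+1 : ℕ):ℤ) * (x r / x s)))
              = ∏ j ∈ range c, (fun i : ℕ => theta p (q ^ (i:ℤ) * (x r / x s))) (j+1) by
            exact Finset.prod_congr rfl fun j _ => by push_cast; ring_nf,
            htel]
          norm_num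
  
end Refl
section PairFull
variable {n : ℕ} (p q : ℂ) (x : Fin n → ℂ)

lemma pair_full (hp : ‖p‖ < 1) (hq : q ≠ 0) (hx : ∀ r, x r ≠ 0)
    (hX : ∀ r s : Fin n, ∀ m : ℤ, (r ≠ s ∨ m ≠ 0) → theta p (q ^ m * (x r / x s)) ≠ 0)
    (k : Fin n → ℕ) (r s : Fin n) (hrs : r ≠ s) :
    tpoch p q (q * (x r / x s)) ((k r : ℤ) - (k s : ℤ))
      * tpoch p q (q * (x s / x r)) ((k s : ℤ) - (k r : ℤ))
    = theta p (q ^ ((k r : ℤ) - (k s : ℤ)) * (x r / x s)) / theta p (x r / x s)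
      * ((-1 : ℂ) ^ ((k r : ℤ) - (k s : ℤ)) * q ^ ch2 ((k r : ℤ) - (k s : ℤ))
        * (x r / x s) ^ ((k r : ℤ) - (k s : ℤ))) := by
  have hth0 : theta p (q ^ (0:ℤ) * (x r / x s)) = theta p (x r / x s) := by norm_num
  rcases le_or_gt (k s) (k r) with hc | hc
  · have hc1 : (k r : ℤ) - (k s : ℤ) = (((k r - k s : ℕ) : ℕ) : ℤ) := by omega
    have hc2 : (k s : ℤ) - (k r : ℤ) = -(((k r - k s : ℕ) : ℕ) : ℤ) := by omega
    rw [hc1, hc2, pair_nat p q x hp hq hx hX r s hrs (k r - k s), hth0,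
      prod_neg_up q hq (x r / x s) (k r - k s)]
  · have hsr : s ≠ r := hrs.symm
    have hc1 : (k s : ℤ) - (k r : ℤ) = (((k s - k r : ℕ) : ℕ) : ℤ) := by omega
    have hc2 : (k r : ℤ) - (k s : ℤ) = -(((k s - k r : ℕ) : ℕ) : ℤ) := by omega
    set c : ℕ := k s - k r with hcdef
    have hpn := pair_nat p q x hp hq hx hX s r hsr c
    rw [hc1, hc2, mul_comm, hpn, prod_neg_up q hq (x s / x r) c]
    -- convert theta quotient
    have hz1 : q ^ (-(c:ℤ)) * (x r / x s) ≠ 0 :=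
      mul_ne_zero (zpow_ne_zero _ hq) (div_ne_zero (hx r) (hx s))
    have hinv1 : (q ^ (-(c:ℤ)) * (x r / x s))⁻¹ = q ^ ((c:ℕ):ℤ) * (x s / x r) := by
      rw [mul_inv, ← zpow_neg, inv_div, neg_neg]
    have ht1 := theta_inv p hp hz1
    rw [hinv1] at ht1
    have hz2 : (x r / x s) ≠ 0 := div_ne_zero (hx r) (hx s)
    have hinv2 : (x r / x s)⁻¹ = x s / x r := inv_div _ _
    have ht2 := theta_inv p hp hz2
    rw [hinv2] at ht2
    rw [ht1, show theta p (q ^ (0:ℤ) * (x s / x r)) = theta p (x s / x r) by norm_num, ht2]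
    -- now pure algebra with nonvanishing theta p (x r / x s)
    have hd : theta p (x r / x s) ≠ 0 := by
      rw [← hth0]; exact hX r s 0 (Or.inl hrs)
    have hq2 : (q:ℂ) ^ ((c:ℕ):ℤ) * q ^ ch2 ((c:ℕ):ℤ) = q ^ ch2 (-((c:ℕ):ℤ)) := by
      rw [← zpow_add₀ hq]
      congr 1
      have h1 : 2 * ((c:ℤ) + ch2 ((c:ℕ):ℤ)) = 2 * ch2 (-((c:ℕ):ℤ)) := by
        rw [mul_add, two_mul_ch2, two_mul_ch2]
        ring
      omega
    have hs1 : (-1 : ℂ) ^ ((c:ℕ):ℤ) = (-1 : ℂ) ^ (-((c:ℕ):ℤ)) := by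
      rw [zpow_neg, ← inv_zpow, inv_neg, inv_one]
    have hs2 : (x s / x r) ^ ((c:ℕ):ℤ) = (x r / x s) ^ (-((c:ℕ):ℤ)) := by
      rw [zpow_neg, ← inv_zpow, inv_div]
    rw [← hq2, hs1, hs2]
    have hxr := hx r
    have hxs := hx s
    field_simp
end PairFull
section Sums
variable {n : ℕ}

lemma prod_pair {M : Type*} [CommMonoid M] (f : Fin n → Fin n → M) (hdiag : ∀ r, f r r = 1) :
    ∏ r, ∏ s, f r s = ∏ r, ∏ s, (if r < s then f r s * f s r else 1) := by
  classical
  rw [← Finset.prod_product', ← Finset.prod_product']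
  have hR : (∏ z ∈ Finset.univ ×ˢ Finset.univ,
        if z.1 < z.2 then f z.1 z.2 * f z.2 z.1 else 1)
      = ∏ z ∈ (Finset.univ ×ˢ Finset.univ).filter (fun z : Fin n × Fin n => z.1 < z.2),
          f z.1 z.2 * f z.2 z.1 := by
    rw [Finset.prod_filter]
  rw [hR, Finset.prod_mul_distrib,
    ← Finset.prod_filter_mul_prod_filter_not (Finset.univ ×ˢ Finset.univ)
      (fun z : Fin n × Fin n => z.1 < z.2) (fun z => f z.1 z.2)]
  congr 1
  have hsub : (Finset.univ ×ˢ Finset.univ).filter (fun z : Fin n × Fin n => z.2 < z.1)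
      ⊆ (Finset.univ ×ˢ Finset.univ).filter (fun z : Fin n × Fin n => ¬ z.1 < z.2) := by
    intro z hz
    simp only [Finset.mem_filter] at hz ⊢
    exact ⟨hz.1, not_lt_of_gt hz.2⟩
  have h1 : (∏ z ∈ (Finset.univ ×ˢ Finset.univ).filter
        (fun z : Fin n × Fin n => ¬ z.1 < z.2), f z.1 z.2)
      = ∏ z ∈ (Finset.univ ×ˢ Finset.univ).filter (fun z : Fin n × Fin n => z.2 < z.1),
          f z.1 z.2 := by
    rw [← Finset.prod_subset hsub]
    intro z hz hnz
    simp only [Finset.mem_filter, Finset.mem_product, Finset.mem_univ, and_self, true_and,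
      not_lt] at hz hnz
    have h12 : z.2 = z.1 := le_antisymm hz hnz
    rw [h12, hdiag]
  rw [h1]
  refine Finset.prod_nbij' (fun z => Prod.swap z) (fun z => Prod.swap z) ?_ ?_ ?_ ?_ ?_
  · intro z hz
    simp only [Finset.mem_filter, Finset.mem_product] at hz ⊢
    exact ⟨⟨Finset.mem_univ _, Finset.mem_univ _⟩, hz.2⟩
  · intro z hz
    simp only [Finset.mem_filter, Finset.mem_product] at hz ⊢
    exact ⟨⟨Finset.mem_univ _, Finset.mem_univ _⟩, hz.2⟩
  · intro z _; simp
  · intro z _; simp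
  · intro z _; rfl

lemma sum_lt_left (g : Fin n → ℤ) :
    ∑ r, ∑ s, (if r < s then g r else 0) = ∑ r : Fin n, ((n : ℤ) - 1 - (r : ℤ)) * g r := by
  refine Finset.sum_congr rfl fun r _ => ?_
  rw [← Finset.sum_filter]
  have hfil : Finset.univ.filter (fun s : Fin n => r < s) = Finset.Ioi r := by
    ext s; simp
  rw [hfil, Finset.sum_const, Fin.card_Ioi, nsmul_eq_mul]
  have : ((n - 1 - (r : ℕ) : ℕ) : ℤ) = (n : ℤ) - 1 - (r : ℤ) := by
    have := r.isLt; omega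
  rw [this]

lemma sum_lt_right (g : Fin n → ℤ) :
    ∑ r, ∑ s, (if r < s then g s else 0) = ∑ s : Fin n, (s : ℤ) * g s := by
  rw [Finset.sum_comm]
  refine Finset.sum_congr rfl fun s _ => ?_
  rw [← Finset.sum_filter]
  have hfil : Finset.univ.filter (fun r : Fin n => r < s) = Finset.Iio s := by
    ext r; simp
  rw [hfil, Finset.sum_const, Fin.card_Iio, nsmul_eq_mul]

lemma sum_lt_sym (g h : Fin n → ℤ) :
    ∑ r, ∑ s, (if r < s then g r * h s + g s * h r else 0)
      = (∑ r, g r) * (∑ r, h r) - ∑ r, g r * h r := by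
  have hsplit : ∀ r s : Fin n, (if r < s then g r * h s + g s * h r else 0)
      = (if r < s then g r * h s else 0) + (if r < s then g s * h r else 0) := by
    intro r s; by_cases h' : r < s <;> simp [h']
  simp only [hsplit, Finset.sum_add_distrib]
  have h2 : ∑ r, ∑ s, (if r < s then g s * h r else 0)
      = ∑ r, ∑ s, (if s < r then g r * h s else 0) := by
    rw [Finset.sum_comm]
  rw [h2, ← Finset.sum_add_distrib]
  simp only [← Finset.sum_add_distrib]
  have h3 : ∀ r s : Fin n, ((if r < s then g r * h s else 0) + (if s < r then g r * h s else 0))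
      = g r * h s - (if r = s then g r * h s else 0) := by
    intro r s
    rcases lt_trichotomy r s with h' | h' | h'
    · simp [h', not_lt_of_gt h', ne_of_lt h']
    · simp [h']
    · simp [h', not_lt_of_gt h', (ne_of_gt h'), lt_asymm h']
  calc ∑ r, ∑ s, ((if r < s then g r * h s else 0) + (if s < r then g r * h s else 0))
      = ∑ r, ∑ s, (g r * h s - (if r = s then g r * h s else 0)) := by
        exact Finset.sum_congr rfl fun r _ => Finset.sum_congr rfl fun s _ => h3 r s
    _ = (∑ r, ∑ s, g r * h s) - ∑ r, ∑ s, (if r = s then g r * h s else 0) := by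
        simp only [Finset.sum_sub_distrib]
    _ = (∑ r, g r) * (∑ r, h r) - ∑ r, g r * h r := by
        congr 1
        · rw [Finset.sum_mul_sum]
        · exact Finset.sum_congr rfl fun r _ => by
            rw [Finset.sum_ite_eq Finset.univ r (fun s => g r * h s)]
            simp

lemma choose_two_cast (m : ℕ) : 2 * ((Nat.choose m 2 : ℕ) : ℤ) = (m : ℤ) * ((m : ℤ) - 1) := by
  have h : Nat.choose m 2 = m * (m - 1) / 2 := Nat.choose_two_right m
  rcases Nat.eq_zero_or_pos m with rfl | hm
  · simp
  · have h2 : 2 * (m * (m - 1) / 2) = m * (m - 1) := by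
      refine Nat.mul_div_cancel' ?_
      rcases Nat.even_or_odd m with he | ho
      · exact Dvd.dvd.mul_right he.two_dvd _
      · refine Dvd.dvd.mul_left ?_ _
        have : Even (m - 1) := Nat.Odd.sub_odd ho odd_one
        exact this.two_dvd
    have h3 : ((m * (m - 1) : ℕ) : ℤ) = (m : ℤ) * ((m : ℤ) - 1) := by
      push_cast [Nat.cast_sub hm]
      ring
    omega

end Sums
section Scalar
variable {n : ℕ}

lemma ite_triple_mul {r s : Fin n} (a b c : ℂ) :
    (if r < s then a * b * c else 1)
      = (if r < s then a else 1) * (if r < s then b else 1) * (if r < s then c else 1) := by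
  by_cases h : r < s <;> simp [h]

lemma prod_ite_zpow (g : ℂ) (hg : g ≠ 0) (e : Fin n → Fin n → ℤ) :
    ∏ r : Fin n, ∏ s : Fin n, (if r < s then g ^ e r s else 1)
      = g ^ (∑ r : Fin n, ∑ s : Fin n, (if r < s then e r s else 0)) := by
  have h1 : ∀ r s : Fin n, (if r < s then g ^ e r s else 1)
      = g ^ (if r < s then e r s else 0) := by
    intro r s; by_cases h : r < s <;> simp [h]
  simp only [h1]
  rw [← prod_zpow_sum g hg]
  exact Finset.prod_congr rfl fun r _ => prod_zpow_sum g hg _ _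

lemma prod_zpow_double (g : ℂ) (hg : g ≠ 0) (e : Fin n → Fin n → ℤ) :
    ∏ r : Fin n, ∏ s : Fin n, g ^ e r s
      = g ^ (∑ r : Fin n, ∑ s : Fin n, e r s) := by
  rw [← prod_zpow_sum g hg]
  exact Finset.prod_congr rfl fun r _ => prod_zpow_sum g hg _ _

lemma sum_ite_diff (k : Fin n → ℕ) :
    ∑ r : Fin n, ∑ s : Fin n, (if r < s then (k r : ℤ) - (k s : ℤ) else 0)
      = ((n : ℤ) - 1) * (∑ r : Fin n, (k r : ℤ)) - 2 * ∑ r : Fin n, (r : ℤ) * (k r : ℤ) := by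
  have h1 : ∀ r s : Fin n, (if r < s then (k r : ℤ) - (k s : ℤ) else 0)
      = (if r < s then (k r : ℤ) else 0) - (if r < s then (k s : ℤ) else 0) := by
    intro r s; by_cases h : r < s <;> simp [h]
  simp only [h1, Finset.sum_sub_distrib]
  rw [sum_lt_left (fun r : Fin n => (k r : ℤ)), sum_lt_right (fun r : Fin n => (k r : ℤ))]
  rw [Finset.sum_congr rfl (fun (r : Fin n) _ => show ((n : ℤ) - 1 - (r:ℤ)) * (k r : ℤ)
    = ((n:ℤ) - 1) * (k r : ℤ) - (r : ℤ) * (k r : ℤ) from by ring), Finset.sum_sub_distrib,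
    ← Finset.mul_sum]
  ring

lemma xpart (x : Fin n → ℂ) (hx : ∀ r, x r ≠ 0) (k : Fin n → ℕ) :
    (∏ r : Fin n, ∏ s : Fin n,
      (if r < s then (x r / x s) ^ ((k r : ℤ) - (k s : ℤ)) else 1))
    * ∏ r : Fin n, ∏ s : Fin n, (x s / x r) ^ ((k r : ℕ) : ℤ)
    = 1 := by
  have hstep : ∀ r s : Fin n, (if r < s then (x r / x s) ^ ((k r : ℤ) - (k s : ℤ)) else 1)
      = (x r) ^ (if r < s then (k r : ℤ) - (k s : ℤ) else 0)
        * (x s) ^ (if r < s then -((k r : ℤ) - (k s : ℤ)) else 0) := by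
    intro r s
    by_cases h : r < s
    · simp only [h, if_true]
      rw [div_zpow, div_eq_mul_inv, ← zpow_neg]
    · simp [h]
  have hstep2 : ∀ r s : Fin n, (x s / x r) ^ ((k r : ℕ) : ℤ)
      = (x s) ^ ((k r : ℕ) : ℤ) * (x r) ^ (-((k r : ℕ) : ℤ)) := by
    intro r s
    rw [div_zpow, div_eq_mul_inv, ← zpow_neg]
  simp only [hstep, hstep2, Finset.prod_mul_distrib]
  have e1 : ∏ r : Fin n, ∏ s : Fin n, (x r) ^ (if r < s then (k r : ℤ) - (k s : ℤ) else 0)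
      = ∏ r : Fin n, (x r) ^ (∑ s : Fin n, if r < s then (k r : ℤ) - (k s : ℤ) else 0) :=
    Finset.prod_congr rfl fun r _ => prod_zpow_sum (x r) (hx r) _ _
  have e2 : ∏ r : Fin n, ∏ s : Fin n, (x s) ^ (if r < s then -((k r : ℤ) - (k s : ℤ)) else 0)
      = ∏ s : Fin n, (x s) ^ (∑ r : Fin n, if r < s then -((k r : ℤ) - (k s : ℤ)) else 0) := by
    rw [Finset.prod_comm]
    exact Finset.prod_congr rfl fun s _ => prod_zpow_sum (x s) (hx s) _ _
  have e3 : ∏ r : Fin n, ∏ s : Fin n, (x s) ^ ((k r : ℕ) : ℤ)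
      = ∏ s : Fin n, (x s) ^ (∑ r : Fin n, ((k r : ℕ) : ℤ)) := by
    rw [Finset.prod_comm]
    exact Finset.prod_congr rfl fun s _ => prod_zpow_sum (x s) (hx s) _ _
  have e4 : ∏ r : Fin n, ∏ s : Fin n, (x r) ^ (-((k r : ℕ) : ℤ))
      = ∏ r : Fin n, (x r) ^ (∑ _s : Fin n, -((k r : ℕ) : ℤ)) :=
    Finset.prod_congr rfl fun r _ => prod_zpow_sum (x r) (hx r) _ _
  rw [e1, e2, e3, e4, ← Finset.prod_mul_distrib, ← Finset.prod_mul_distrib,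
    ← Finset.prod_mul_distrib]
  apply Finset.prod_eq_one
  intro r _
  simp only [← zpow_add₀ (hx r)]
  convert zpow_zero (x r) using 2
  have hcomb : ∀ s : Fin n,
      (if r < s then (k r : ℤ) - (k s : ℤ) else 0)
        + (if s < r then -((k s : ℤ) - (k r : ℤ)) else 0)
      = ((k r : ℤ) - (k s : ℤ)) - (if r = s then (k r : ℤ) - (k s : ℤ) else 0) := by
    intro s
    rcases lt_trichotomy r s with h | h | h
    · simp [h, not_lt_of_gt h, ne_of_lt h]
    · simp [h]
    · simp [not_lt_of_gt h, ne_of_gt h, lt_asymm h, h]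
  have hsum1 : ((∑ s : Fin n, if r < s then (k r : ℤ) - (k s : ℤ) else 0)
        + ∑ s : Fin n, if s < r then -((k s : ℤ) - (k r : ℤ)) else 0)
      = (n : ℤ) * (k r : ℤ) - ∑ t : Fin n, (k t : ℤ) := by
    rw [← Finset.sum_add_distrib]
    rw [Finset.sum_congr rfl fun s _ => hcomb s, Finset.sum_sub_distrib,
      Finset.sum_ite_eq Finset.univ r (fun s => (k r : ℤ) - (k s : ℤ)), Finset.sum_sub_distrib,
      Finset.sum_const, Finset.card_univ, Fintype.card_fin, nsmul_eq_mul]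
    simp
  have hD : (∑ _s : Fin n, -((k r : ℕ) : ℤ)) = -((n : ℤ) * (k r : ℤ)) := by
    rw [Finset.sum_const, Finset.card_univ, Fintype.card_fin, nsmul_eq_mul]
    ring
  rw [hD, hsum1]
  ring

end Scalar
section ScalarMain
variable {n : ℕ}

lemma sum_lt_left' (g : Fin n → ℤ) :
    ∑ r : Fin n, ∑ s : Fin n, (if r < s then g r else 0)
      = ((n:ℤ) - 1) * (∑ r : Fin n, g r) - ∑ r : Fin n, (r:ℤ) * g r := by
  rw [sum_lt_left g,
    Finset.sum_congr rfl (fun (r : Fin n) _ => show ((n:ℤ)-1-(r:ℤ)) * g r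
      = ((n:ℤ)-1)*g r - (r:ℤ)*g r from by ring),
    Finset.sum_sub_distrib, ← Finset.mul_sum]

lemma sum_double_inner_const (c : Fin n → ℤ) :
    (∑ r : Fin n, ∑ _s : Fin n, c r) = (n:ℤ) * ∑ r : Fin n, c r := by
  rw [Finset.sum_congr rfl (fun (r : Fin n) _ =>
      show (∑ _s : Fin n, c r) = (n:ℤ) * c r from by
        rw [Finset.sum_const, Finset.card_univ, Fintype.card_fin, nsmul_eq_mul]),
    ← Finset.mul_sum]

lemma sum_double_right_const (v g : Fin n → ℤ) :
    ∑ r : Fin n, ∑ s : Fin n, v s * g r = (∑ s : Fin n, v s) * (∑ r : Fin n, g r) := by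
  rw [Finset.sum_congr rfl (fun (r : Fin n) _ =>
      show (∑ s : Fin n, v s * g r) = (∑ s : Fin n, v s) * g r from by
        rw [← Finset.sum_mul]),
    Finset.mul_sum]

lemma qexp_identity (N k : Fin n → ℕ) :
    (∑ r : Fin n, ∑ s : Fin n, (if r < s then ch2 ((k r:ℤ) - (k s:ℤ)) else 0))
      + ∑ r : Fin n, ∑ s : Fin n, ((N s:ℤ) * (k r:ℤ) - ch2 ((k r:ℕ):ℤ))
    = ((∑ r, N r : ℕ):ℤ) * ((∑ r, k r : ℕ):ℤ)
        - (Nat.choose (∑ r, k r) 2 : ℤ) + (∑ r : Fin n, (r:ℤ) * (k r:ℤ)) := by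
  refine mul_left_cancel₀ (two_ne_zero) ?_
  have h2E2 : 2 * (∑ r : Fin n, ∑ s : Fin n, (if r < s then ch2 ((k r:ℤ) - (k s:ℤ)) else 0))
      = ∑ r : Fin n, ∑ s : Fin n,
          (if r < s then ((k r:ℤ) - (k s:ℤ)) * ((k r:ℤ) - (k s:ℤ)) - ((k r:ℤ) - (k s:ℤ))
           else 0) := by
    rw [Finset.mul_sum]
    refine Finset.sum_congr rfl fun r _ => ?_
    rw [Finset.mul_sum]
    refine Finset.sum_congr rfl fun s _ => ?_
    by_cases h : r < s
    · simp only [h, if_true]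
      linear_combination two_mul_ch2 ((k r:ℤ) - (k s:ℤ))
    · simp [h]
  have hdec : ∀ r s : Fin n,
      (if r < s then ((k r:ℤ) - (k s:ℤ)) * ((k r:ℤ) - (k s:ℤ)) - ((k r:ℤ) - (k s:ℤ)) else 0)
      = ((if r < s then (k r:ℤ) * (k r:ℤ) else 0) + (if r < s then (k s:ℤ) * (k s:ℤ) else 0)
          - (if r < s then ((k r:ℤ) * (k s:ℤ) + (k s:ℤ) * (k r:ℤ)) else 0))
        - ((if r < s then (k r:ℤ) else 0) - (if r < s then (k s:ℤ) else 0)) := by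
    intro r s
    by_cases h : r < s
    · simp only [h, if_true]; ring
    · simp [h]
  have h2E4 : 2 * (∑ r : Fin n, ∑ s : Fin n, ((N s:ℤ) * (k r:ℤ) - ch2 ((k r:ℕ):ℤ)))
      = ∑ r : Fin n, ∑ s : Fin n,
          ((2 * (N s:ℤ)) * (k r:ℤ) - ((k r:ℤ) * (k r:ℤ) - (k r:ℤ))) := by
    rw [Finset.mul_sum]
    refine Finset.sum_congr rfl fun r _ => ?_
    rw [Finset.mul_sum]
    refine Finset.sum_congr rfl fun s _ => ?_
    linear_combination (-1 : ℤ) * two_mul_ch2 ((k r:ℕ):ℤ)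
  rw [mul_add, h2E2, h2E4]
  rw [Finset.sum_congr rfl (fun (r : Fin n) _ => Finset.sum_congr rfl
    (fun (s : Fin n) _ => hdec r s))]
  simp only [Finset.sum_sub_distrib, Finset.sum_add_distrib]
  rw [sum_lt_left' (fun r : Fin n => (k r:ℤ) * (k r:ℤ)),
    sum_lt_right (fun r : Fin n => (k r:ℤ) * (k r:ℤ)),
    sum_lt_sym (fun r : Fin n => (k r:ℤ)) (fun r : Fin n => (k r:ℤ)),
    sum_lt_left' (fun r : Fin n => (k r:ℤ)),
    sum_lt_right (fun r : Fin n => (k r:ℤ)),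
    sum_double_right_const (fun s : Fin n => 2 * (N s:ℤ)) (fun r : Fin n => (k r:ℤ)),
    sum_double_inner_const (fun r : Fin n => (k r:ℤ) * (k r:ℤ)),
    sum_double_inner_const (fun r : Fin n => (k r:ℤ)),
    show (∑ s : Fin n, 2 * (N s:ℤ)) = 2 * ∑ s : Fin n, (N s:ℤ) from (Finset.mul_sum _ _ _).symm]
  have hcN : ((∑ r, N r : ℕ):ℤ) = ∑ r : Fin n, (N r:ℤ) := by push_cast; rfl
  have hck : ((∑ r, k r : ℕ):ℤ) = ∑ r : Fin n, (k r:ℤ) := by push_cast; rfl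
  have hch := choose_two_cast (∑ r, k r)
  rw [hck] at hch
  rw [hcN, hck]
  linear_combination hch

end ScalarMain
section ScalarFinal
variable {n : ℕ}

lemma scalar_main (q : ℂ) (x : Fin n → ℂ) (hq : q ≠ 0) (hx : ∀ r, x r ≠ 0)
    (N k : Fin n → ℕ) :
    (∏ r : Fin n, ∏ s : Fin n,
       (if r < s then (-1:ℂ) ^ ((k r:ℤ) - (k s:ℤ)) * q ^ ch2 ((k r:ℤ) - (k s:ℤ))
           * (x r / x s) ^ ((k r:ℤ) - (k s:ℤ)) else 1))
    * (∏ r : Fin n, ∏ s : Fin n,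
       ((-1:ℂ) ^ ((k r:ℕ):ℤ) * q ^ ((N s:ℤ) * (k r:ℤ) - ch2 ((k r:ℕ):ℤ))
         * (x s / x r) ^ ((k r:ℕ):ℤ)))
    = (-1:ℂ) ^ (∑ r, k r) * q ^ (((∑ r, N r : ℕ):ℤ) * ((∑ r, k r : ℕ):ℤ)
        - (Nat.choose (∑ r, k r) 2 : ℤ) + (∑ r : Fin n, (r:ℤ) * (k r:ℤ))) := by
  have hm1 : (-1 : ℂ) ≠ 0 := by norm_num
  simp only [ite_triple_mul, Finset.prod_mul_distrib]
  rw [prod_ite_zpow (-1 : ℂ) hm1 (fun r s => (k r:ℤ) - (k s:ℤ)),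
    prod_ite_zpow q hq (fun r s => ch2 ((k r:ℤ) - (k s:ℤ))),
    prod_zpow_double (-1 : ℂ) hm1 (fun r s => ((k r:ℕ):ℤ)),
    prod_zpow_double q hq (fun r s => (N s:ℤ) * (k r:ℤ) - ch2 ((k r:ℕ):ℤ))]
  have hx1 := xpart x hx k
  calc ((-1:ℂ) ^ (∑ r : Fin n, ∑ s : Fin n, if r < s then (k r:ℤ) - (k s:ℤ) else 0)
          * q ^ (∑ r : Fin n, ∑ s : Fin n, if r < s then ch2 ((k r:ℤ) - (k s:ℤ)) else 0)
          * ∏ r : Fin n, ∏ s : Fin n,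
              (if r < s then (x r / x s) ^ ((k r:ℤ) - (k s:ℤ)) else 1))
        * ((-1:ℂ) ^ (∑ r : Fin n, ∑ s : Fin n, ((k r:ℕ):ℤ))
          * q ^ (∑ r : Fin n, ∑ s : Fin n, ((N s:ℤ) * (k r:ℤ) - ch2 ((k r:ℕ):ℤ)))
          * ∏ r : Fin n, ∏ s : Fin n, (x s / x r) ^ ((k r:ℕ):ℤ))
      = ((-1:ℂ) ^ (∑ r : Fin n, ∑ s : Fin n, if r < s then (k r:ℤ) - (k s:ℤ) else 0)
          * (-1:ℂ) ^ (∑ r : Fin n, ∑ s : Fin n, ((k r:ℕ):ℤ)))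
        * (q ^ (∑ r : Fin n, ∑ s : Fin n, if r < s then ch2 ((k r:ℤ) - (k s:ℤ)) else 0)
          * q ^ (∑ r : Fin n, ∑ s : Fin n, ((N s:ℤ) * (k r:ℤ) - ch2 ((k r:ℕ):ℤ))))
        * ((∏ r : Fin n, ∏ s : Fin n,
              (if r < s then (x r / x s) ^ ((k r:ℤ) - (k s:ℤ)) else 1))
          * ∏ r : Fin n, ∏ s : Fin n, (x s / x r) ^ ((k r:ℕ):ℤ)) := by ring
    _ = ((-1:ℂ) ^ ((∑ r : Fin n, ∑ s : Fin n, if r < s then (k r:ℤ) - (k s:ℤ) else 0)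
            + ∑ r : Fin n, ∑ s : Fin n, ((k r:ℕ):ℤ)))
        * (q ^ ((∑ r : Fin n, ∑ s : Fin n, if r < s then ch2 ((k r:ℤ) - (k s:ℤ)) else 0)
            + ∑ r : Fin n, ∑ s : Fin n, ((N s:ℤ) * (k r:ℤ) - ch2 ((k r:ℕ):ℤ)))) := by
        rw [hx1, mul_one, ← zpow_add₀ hm1, ← zpow_add₀ hq]
    _ = (-1:ℂ) ^ (∑ r, k r) * q ^ (((∑ r, N r : ℕ):ℤ) * ((∑ r, k r : ℕ):ℤ)
        - (Nat.choose (∑ r, k r) 2 : ℤ) + (∑ r : Fin n, (r:ℤ) * (k r:ℤ))) := by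
        rw [qexp_identity N k]
        congr 1
        -- sign part
        rw [sum_ite_diff k, sum_double_inner_const (fun r : Fin n => (k r:ℤ)),
          ← zpow_natCast (-1 : ℂ) (∑ r, k r)]
        have hck : ((∑ r, k r : ℕ):ℤ) = ∑ r : Fin n, (k r:ℤ) := by push_cast; rfl
        have hexp : ((n:ℤ) - 1) * (∑ r : Fin n, (k r:ℤ)) - 2 * (∑ r : Fin n, (r:ℤ) * (k r:ℤ))
              + (n:ℤ) * (∑ r : Fin n, (k r:ℤ))
            = ((∑ r, k r : ℕ):ℤ)
              + 2 * (((n:ℤ) - 1) * (∑ r : Fin n, (k r:ℤ)) - (∑ r : Fin n, (r:ℤ) * (k r:ℤ))) := by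
          rw [hck]; ring
        rw [hexp, zpow_add₀ hm1, zpow_mul]
        norm_num

end ScalarFinal
/-- The elliptic Vandermonde factor
`V(k) = ∏_{1≤r<s≤n} θ(q^{k_r-k_s} x_r/x_s;p)/θ(x_r/x_s;p)`. -/
noncomputable def vdm {n : ℕ} (p q : ℂ) (x : Fin n → ℂ) (k : Fin n → ℕ) : ℂ :=
  ∏ r : Fin n, ∏ s : Fin n,
    if r < s then
      theta p (q ^ ((k r : ℤ) - (k s : ℤ)) * (x r / x s)) / theta p (x r / x s)
    else 1

theorem statement1 {n : ℕ} (p q : ℂ) (x : Fin n → ℂ)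
    (hp : ‖p‖ < 1) (hq : q ≠ 0) (hx : ∀ r, x r ≠ 0)
    (hX : ∀ r s : Fin n, ∀ m : ℤ, (r ≠ s ∨ m ≠ 0) → theta p (q ^ m * (x r / x s)) ≠ 0)
    (N k : Fin n → ℕ) (hkN : ∀ r, k r ≤ N r) :
    (∏ r : Fin n, ∏ s : Fin n,
        (tpoch p q (q ^ (1 + (k r : ℤ) - (k s : ℤ)) * (x r / x s)) ((N r : ℤ) - (k r : ℤ)))⁻¹)
      = vdm p q x k
        * (∏ r : Fin n, ∏ s : Fin n,
            tpoch p q (q ^ (-(N s : ℤ)) * (x r / x s)) (k r)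
              / tpoch p q (q * (x r / x s)) (N r))
        * (-1 : ℂ) ^ (∑ r, k r)
        * q ^ (((∑ r, N r : ℕ) : ℤ) * ((∑ r, k r : ℕ) : ℤ)
              - (Nat.choose (∑ r, k r) 2 : ℤ)
              + (∑ r : Fin n, (r : ℤ) * (k r : ℤ))) := by
  have step1 : (∏ r : Fin n, ∏ s : Fin n,
        (tpoch p q (q ^ (1 + (k r : ℤ) - (k s : ℤ)) * (x r / x s)) ((N r : ℤ) - (k r : ℤ)))⁻¹)
      = (∏ r : Fin n, ∏ s : Fin n, tpoch p q (q * (x r / x s)) ((k r : ℤ) - (k s : ℤ)))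
        * (∏ r : Fin n, ∏ s : Fin n,
            tpoch p q (q ^ (1 + (N r : ℤ) - (k s : ℤ)) * (x r / x s)) ((k s : ℕ) : ℤ))
        * (∏ r : Fin n, ∏ s : Fin n, (tpoch p q (q * (x r / x s)) ((N r : ℕ) : ℤ))⁻¹) := by
    rw [Finset.prod_congr rfl fun (r : Fin n) _ => Finset.prod_congr rfl fun (s : Fin n) _ =>
      PP p q x hq hX N k hkN r s]
    simp only [Finset.prod_mul_distrib]
  have step2 : (∏ r : Fin n, ∏ s : Fin n,
        tpoch p q (q ^ (1 + (N r : ℤ) - (k s : ℤ)) * (x r / x s)) ((k s : ℕ) : ℤ))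
      = (∏ r : Fin n, ∏ s : Fin n,
          ((-1:ℂ) ^ ((k r:ℕ):ℤ) * q ^ ((N s:ℤ) * (k r:ℤ) - ch2 ((k r:ℕ):ℤ))
            * (x s / x r) ^ ((k r:ℕ):ℤ)))
        * ∏ r : Fin n, ∏ s : Fin n, tpoch p q (q ^ (-(N s : ℤ)) * (x r / x s)) ((k r : ℕ) : ℤ) := by
    rw [Finset.prod_comm]
    have hpt : ∀ a b : Fin n,
        tpoch p q (q ^ (1 + (N b : ℤ) - (k a : ℤ)) * (x b / x a)) ((k a : ℕ) : ℤ)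
        = ((-1:ℂ) ^ ((k a:ℕ):ℤ) * q ^ ((N b:ℤ) * (k a:ℤ) - ch2 ((k a:ℕ):ℤ))
            * (x b / x a) ^ ((k a:ℕ):ℤ))
          * tpoch p q (q ^ (-(N b : ℤ)) * (x a / x b)) ((k a : ℕ) : ℤ) := by
      intro a b
      rw [tpoch_reflect p q x hp hq hx a b (N b) (k a),
        prod_neg_shift q hq ((N b : ℕ) : ℤ) (x b / x a) (k a)]
    rw [Finset.prod_congr rfl fun (a : Fin n) _ => Finset.prod_congr rfl fun (b : Fin n) _ =>
      hpt a b]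
    simp only [Finset.prod_mul_distrib]
  have step3 : (∏ r : Fin n, ∏ s : Fin n, tpoch p q (q * (x r / x s)) ((k r : ℤ) - (k s : ℤ)))
      = vdm p q x k
        * ∏ r : Fin n, ∏ s : Fin n,
            (if r < s then (-1:ℂ) ^ ((k r:ℤ) - (k s:ℤ)) * q ^ ch2 ((k r:ℤ) - (k s:ℤ))
              * (x r / x s) ^ ((k r:ℤ) - (k s:ℤ)) else 1) := by
    rw [prod_pair (fun r s => tpoch p q (q * (x r / x s)) ((k r : ℤ) - (k s : ℤ)))
      (fun r => by simp only [sub_self, tpoch_zero])]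
    have hpair : ∀ r s : Fin n, (if r < s then
          tpoch p q (q * (x r / x s)) ((k r:ℤ) - (k s:ℤ))
            * tpoch p q (q * (x s / x r)) ((k s:ℤ) - (k r:ℤ)) else 1)
        = (if r < s then
            theta p (q ^ ((k r:ℤ) - (k s:ℤ)) * (x r / x s)) / theta p (x r / x s) else 1)
          * (if r < s then (-1:ℂ) ^ ((k r:ℤ) - (k s:ℤ)) * q ^ ch2 ((k r:ℤ) - (k s:ℤ))
              * (x r / x s) ^ ((k r:ℤ) - (k s:ℤ)) else 1) := by
      intro r s
      by_cases h : r < s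
      · simp only [h, if_true]
        exact pair_full p q x hp hq hx hX k r s (ne_of_lt h)
      · simp [h]
    rw [Finset.prod_congr rfl fun (r : Fin n) _ => Finset.prod_congr rfl fun (s : Fin n) _ =>
      hpair r s]
    simp only [Finset.prod_mul_distrib]
    rw [vdm]
  have hRHS : (∏ r : Fin n, ∏ s : Fin n,
        tpoch p q (q ^ (-(N s : ℤ)) * (x r / x s)) (k r)
          / tpoch p q (q * (x r / x s)) (N r))
      = (∏ r : Fin n, ∏ s : Fin n, tpoch p q (q ^ (-(N s : ℤ)) * (x r / x s)) ((k r : ℕ) : ℤ))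
        * ∏ r : Fin n, ∏ s : Fin n, (tpoch p q (q * (x r / x s)) ((N r : ℕ) : ℤ))⁻¹ := by
    simp only [div_eq_mul_inv, Finset.prod_mul_distrib]
  have hsc := scalar_main q x hq hx N k
  rw [step1, step2, step3, hRHS]
  linear_combination (vdm p q x k
    * (∏ r : Fin n, ∏ s : Fin n, tpoch p q (q ^ (-(N s : ℤ)) * (x r / x s)) ((k r : ℕ) : ℤ))
    * ∏ r : Fin n, ∏ s : Fin n, (tpoch p q (q * (x r / x s)) ((N r : ℕ) : ℤ))⁻¹) * hsc
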